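/- arXiv:2502.10199 — 2 statements merged into one kernel-verified Lean document; each statement's English description precedes it below -/
import Mathlib

section
/- The Hug ODE is time-reversible: if (x(t), v(t)) is a solution of the Hug ODE on an interval I, then (x̃(t), ṽ(t)) := (x(−t), −v(−t)) is a solution of the same system on −I. -/
open Matrix MeasureTheory

noncomputable section

abbrev Evec (n : ℕ) : Type := EuclideanSpace ℝ (Fin n)

/-- Apply a matrix to a vector of Euclidean space. -/
def mvE {m n : ℕ} (A : Matrix (Fin m) (Fin n) ℝ) (v : Evec n) : Evec m :=
  Matrix.toEuclideanLin A v

/-- Moore–Penrose pseudoinverse `Aᵀ(AAᵀ)⁻¹` of a full-rank wide matrix. -/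
def pinv {m n : ℕ} (A : Matrix (Fin m) (Fin n) ℝ) : Matrix (Fin n) (Fin m) ℝ :=
  Aᵀ * (A * Aᵀ)⁻¹

/-- Orthogonal projection onto the normal space: `N = A⁺A`. -/
def Nproj {m n : ℕ} (A : Matrix (Fin m) (Fin n) ℝ) : Matrix (Fin n) (Fin n) ℝ :=
  pinv A * A

/-- Orthogonal projection onto the tangent space: `T = I - N`. -/
def Tproj {m n : ℕ} (A : Matrix (Fin m) (Fin n) ℝ) : Matrix (Fin n) (Fin n) ℝ :=
  1 - Nproj A

/-- Reflection: `R = I - 2N`. -/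
def Rrefl {m n : ℕ} (A : Matrix (Fin m) (Fin n) ℝ) : Matrix (Fin n) (Fin n) ℝ :=
  1 - (2 : ℝ) • Nproj A

/-- Golub–Pereyra term `N′_⊥(x)[w] = J(x)⁺ H(x)[w,·] T(x)` (as a matrix),
built from the Jacobian matrix `A = J(x)` and the matrix `Hw = H(x)[w,·]`. -/
def Nperp' {m n : ℕ} (A Hw : Matrix (Fin m) (Fin n) ℝ) : Matrix (Fin n) (Fin n) ℝ :=
  pinv A * Hw * Tproj A

/-- Golub–Pereyra term `N′_∥(x)[w] = (N′_⊥(x)[w])ᵀ`. -/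
def Npar' {m n : ℕ} (A Hw : Matrix (Fin m) (Fin n) ℝ) : Matrix (Fin n) (Fin n) ℝ :=
  (Nperp' A Hw)ᵀ

/-- The right-hand side of the velocity equation of the Hug ODE:
`(N′_∥(x)[(T(x)−N(x))v] − N′_⊥(x)[(T(x)−N(x))v]) v`. -/
def hugVField {m n : ℕ} (J : Evec n → Matrix (Fin m) (Fin n) ℝ)
    (Hm : Evec n → Evec n → Matrix (Fin m) (Fin n) ℝ) (x v : Evec n) : Evec n :=
  mvE (Npar' (J x) (Hm x (mvE (Tproj (J x) - Nproj (J x)) v))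
      - Nperp' (J x) (Hm x (mvE (Tproj (J x) - Nproj (J x)) v))) v

lemma mvE_neg {m n : ℕ} (A : Matrix (Fin m) (Fin n) ℝ) (v : Evec n) :
    mvE A (-v) = -mvE A v := by
  simp [mvE, map_neg]

lemma mvE_matneg {m n : ℕ} (A : Matrix (Fin m) (Fin n) ℝ) (v : Evec n) :
    mvE (-A) v = -mvE A v := by
  simp [mvE, map_neg]

theorem hug_ode_time_reversible
    (m n : ℕ) (hm : 0 < m) (hmn : m < n)
    (f : Evec n → Evec m) (hf : ContDiff ℝ (⊤ : ℕ∞) f)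
    (J : Evec n → Matrix (Fin m) (Fin n) ℝ)
    (hJ : ∀ x, HasFDerivAt f
      (LinearMap.toContinuousLinearMap (Matrix.toEuclideanLin (J x))) x)
    (hrank : ∀ x, (J x).rank = m)
    (Hm : Evec n → Evec n → Matrix (Fin m) (Fin n) ℝ)
    (hHm : ∀ (x w z : Evec n), mvE (Hm x w) z = iteratedFDeriv ℝ 2 f x ![w, z])
    (I : Set ℝ) (x v : ℝ → Evec n)
    (hx : ∀ t ∈ I, HasDerivAt x (mvE (Tproj (J (x t))) (v t)) t)
    (hv : ∀ t ∈ I, HasDerivAt v (hugVField J Hm (x t) (v t)) t)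
    :
    ∀ t : ℝ, t ∈ (fun s : ℝ => -s) '' I →
      HasDerivAt (fun s : ℝ => x (-s))
        (mvE (Tproj (J (x (-t)))) (-v (-t))) t ∧
      HasDerivAt (fun s : ℝ => -v (-s))
        (hugVField J Hm (x (-t)) (-v (-t))) t := by
  -- Hm is odd in its second argument
  have hHmneg : ∀ (x w : Evec n), Hm x (-w) = -(Hm x w) := by
    intro x w
    have hlin : Matrix.toEuclideanLin (Hm x (-w)) = Matrix.toEuclideanLin (-(Hm x w)) := by
      apply LinearMap.ext
      intro z
      have e1 : (Matrix.toEuclideanLin (Hm x (-w))) z = mvE (Hm x (-w)) z := rfl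
      have e2 : (Matrix.toEuclideanLin (-(Hm x w))) z = mvE (-(Hm x w)) z := rfl
      rw [e1, e2, hHm, mvE_matneg]
      set F := iteratedFDeriv ℝ 2 f x with hF
      have h1 : ![-w, z] = Function.update ![w, z] 0 (-w) := by
        ext i j; fin_cases i <;> simp
      have h2 : ![w, z] = Function.update ![w, z] 0 w := by
        ext i j; fin_cases i <;> simp
      have hneg := F.toMultilinearMap.map_update_neg ![w, z] 0 w
      simp only [ContinuousMultilinearMap.coe_coe] at hneg
      rw [h1, hneg, ← h2, hHm]
    exact (Matrix.toEuclideanLin.injective hlin)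
  -- hugVField is even in v
  have hugEven : ∀ (p w : Evec n), hugVField J Hm p (-w) = hugVField J Hm p w := by
    intro p w
    unfold hugVField
    rw [mvE_neg (Tproj (J p) - Nproj (J p)) w, hHmneg]
    have hmat : Npar' (J p) (-(Hm p (mvE (Tproj (J p) - Nproj (J p)) w)))
        - Nperp' (J p) (-(Hm p (mvE (Tproj (J p) - Nproj (J p)) w)))
        = -(Npar' (J p) (Hm p (mvE (Tproj (J p) - Nproj (J p)) w))
          - Nperp' (J p) (Hm p (mvE (Tproj (J p) - Nproj (J p)) w))) := by
      unfold Npar' Nperp'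
      simp [Matrix.mul_neg, Matrix.neg_mul, Matrix.transpose_neg]
      abel
    rw [hmat, mvE_matneg, mvE_neg, neg_neg]
  intro t ht
  obtain ⟨s, hs, rfl⟩ := ht
  have hsI : -(-s) ∈ I := by simpa using hs
  have hxd := hx (-(-s)) hsI
  have hvd := hv (-(-s)) hsI
  have hneg : HasDerivAt (fun u : ℝ => -u) (-1 : ℝ) (-s) := (hasDerivAt_id (-s)).neg
  constructor
  · have hc := hxd.scomp (-s) hneg
    have : ((-1 : ℝ) • mvE (Tproj (J (x (-(-s))))) (v (-(-s))))
        = mvE (Tproj (J (x (-(-s))))) (-v (-(-s))) := by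
      rw [mvE_neg]; simp
    rw [this] at hc
    exact hc
  · have hc := (hvd.scomp (-s) hneg).neg
    have : -((-1 : ℝ) • hugVField J Hm (x (-(-s))) (v (-(-s))))
        = hugVField J Hm (x (-(-s))) (-v (-(-s))) := by
      rw [hugEven]; simp
    rw [this] at hc
    exact hc
end
end

section
/- If (x(t), v(t)) is a solution of the Hug ODE, then the normal velocity component v_⊥(t) = N(x(t))v(t) satisfies d/dt v_⊥ = N′_∥(x)[v_∥]v_⊥ + N′_⊥(x)[v_⊥]v_∥, where v_∥(t) = T(x(t))v(t). -/
open Matrix MeasureTheory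

noncomputable section

/-! ### Auxiliary lemmas -/

lemma mvE_apply {m n : ℕ} (A : Matrix (Fin m) (Fin n) ℝ) (v : Evec n) (i : Fin m) :
    mvE A v i = ∑ j, A i j * v j := by
  simp [mvE, Matrix.toEuclideanLin_apply, Matrix.mulVec, dotProduct]

lemma mvE_single {m n : ℕ} (A : Matrix (Fin m) (Fin n) ℝ) (j : Fin n) (i : Fin m) :
    mvE A (EuclideanSpace.single j 1) i = A i j := by
  simp [mvE_apply, EuclideanSpace.single_apply]

lemma mvE_mul {m n k : ℕ} (A : Matrix (Fin m) (Fin n) ℝ) (B : Matrix (Fin n) (Fin k) ℝ)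
    (v : Evec k) : mvE (A * B) v = mvE A (mvE B v) := by
  simp [mvE, Matrix.toEuclideanLin_apply]

lemma mvE_add_mat {m n : ℕ} (A B : Matrix (Fin m) (Fin n) ℝ) (v : Evec n) :
    mvE (A + B) v = mvE A v + mvE B v := by
  simp [mvE, map_add]

lemma mvE_sub_mat {m n : ℕ} (A B : Matrix (Fin m) (Fin n) ℝ) (v : Evec n) :
    mvE (A - B) v = mvE A v - mvE B v := by
  simp [mvE, map_sub]

lemma mvE_neg_mat {m n : ℕ} (A : Matrix (Fin m) (Fin n) ℝ) (v : Evec n) :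
    mvE (-A) v = -(mvE A v) := by
  simp [mvE, map_neg]

/-! ### Entrywise derivative machinery -/

/-- Entrywise derivative of a matrix-valued path. -/
def HD {a b : ℕ} (M : ℝ → Matrix (Fin a) (Fin b) ℝ) (M' : Matrix (Fin a) (Fin b) ℝ)
    (t : ℝ) : Prop :=
  ∀ i j, HasDerivAt (fun s => M s i j) (M' i j) t

lemma HD.transpose {a b : ℕ} {M : ℝ → Matrix (Fin a) (Fin b) ℝ} {M' : Matrix (Fin a) (Fin b) ℝ}
    {t : ℝ} (hM : HD M M' t) :
    HD (fun s => (M s)ᵀ) M'ᵀ t := fun i j => hM j i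

lemma HD.mul {a b c : ℕ} {M : ℝ → Matrix (Fin a) (Fin b) ℝ} {P : ℝ → Matrix (Fin b) (Fin c) ℝ}
    {M' : Matrix (Fin a) (Fin b) ℝ} {P' : Matrix (Fin b) (Fin c) ℝ} {t : ℝ}
    (hM : HD M M' t) (hP : HD P P' t) :
    HD (fun s => M s * P s) (M' * P t + M t * P') t := fun i j => by
  have : HasDerivAt (fun s => ∑ k, M s i k * P s k j)
      (∑ k, (M' i k * P t k j + M t i k * P' k j)) t :=
    HasDerivAt.fun_sum fun k _ => (hM i k).mul (hP k j)
  simpa [Matrix.mul_apply, Matrix.add_apply, Finset.sum_add_distrib] using this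

lemma HD.unique {a b : ℕ} {M : ℝ → Matrix (Fin a) (Fin b) ℝ}
    {M1 M2 : Matrix (Fin a) (Fin b) ℝ} {t : ℝ}
    (h1 : HD M M1 t) (h2 : HD M M2 t) : M1 = M2 := by
  ext i j; exact (h1 i j).unique (h2 i j)

/-- determinant of an entrywise-differentiable path is differentiable. -/
lemma diff_det {a : ℕ} {M : ℝ → Matrix (Fin a) (Fin a) ℝ} {t : ℝ}
    (h : ∀ i j, DifferentiableAt ℝ (fun s => M s i j) t) :
    DifferentiableAt ℝ (fun s => (M s).det) t := by
  simp only [Matrix.det_apply']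
  apply DifferentiableAt.fun_sum
  intro σ _
  apply DifferentiableAt.const_mul
  exact DifferentiableAt.fun_finsetProd (fun i _ => h (σ i) i)

lemma diff_adjugate {a : ℕ} {M : ℝ → Matrix (Fin a) (Fin a) ℝ} {t : ℝ}
    (h : ∀ i j, DifferentiableAt ℝ (fun s => M s i j) t) (i j : Fin a) :
    DifferentiableAt ℝ (fun s => (M s).adjugate i j) t := by
  simp only [Matrix.adjugate_apply]
  apply diff_det
  intro k l
  simp only [Matrix.updateRow_apply]
  by_cases hk : k = j <;> simp [hk, h]

lemma HD.inv {a : ℕ} {M : ℝ → Matrix (Fin a) (Fin a) ℝ} {M' : Matrix (Fin a) (Fin a) ℝ} {t : ℝ}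
    (hM : HD M M' t) (hu : IsUnit (M t).det) :
    HD (fun s => (M s)⁻¹) (-((M t)⁻¹ * M' * (M t)⁻¹)) t := by
  have hdne : (M t).det ≠ 0 := by simpa [isUnit_iff_ne_zero] using hu
  have hdiff : ∀ i j, DifferentiableAt ℝ (fun s => (M s)⁻¹ i j) t := by
    intro i j
    have he : (fun s => (M s)⁻¹ i j) = fun s => ((M s).det)⁻¹ * (M s).adjugate i j := by
      funext s; rw [Matrix.inv_def]; simp [Ring.inverse_eq_inv']
    rw [he]
    exact ((diff_det (fun i j => (hM i j).differentiableAt)).inv hdne).mul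
      (diff_adjugate (fun i j => (hM i j).differentiableAt) i j)
  set K' : Matrix (Fin a) (Fin a) ℝ := Matrix.of fun i j => deriv (fun s => (M s)⁻¹ i j) t
    with hK'def
  have hK : HD (fun s => (M s)⁻¹) K' t := fun i j => (hdiff i j).hasDerivAt
  have hdet_cont : ContinuousAt (fun s => (M s).det) t :=
    (diff_det (fun i j => (hM i j).differentiableAt)).continuousAt
  have hev : ∀ᶠ s in nhds t, (M s) * (M s)⁻¹ = 1 := by
    filter_upwards [hdet_cont.eventually_ne hdne] with s hs
    exact Matrix.mul_nonsing_inv _ (isUnit_iff_ne_zero.mpr hs)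
  have hprod : HD (fun s => M s * (M s)⁻¹) (M' * (M t)⁻¹ + M t * K') t := hM.mul hK
  have hzero : HD (fun s => M s * (M s)⁻¹) 0 t := by
    intro i j
    apply (hasDerivAt_const t ((1 : Matrix (Fin a) (Fin a) ℝ) i j)).congr_of_eventuallyEq
    filter_upwards [hev] with s hs; rw [hs]
  have heq : M' * (M t)⁻¹ + M t * K' = 0 := hprod.unique hzero
  have hsolve : K' = -((M t)⁻¹ * M' * (M t)⁻¹) := by
    have h3 : (M t)⁻¹ * (M' * (M t)⁻¹ + M t * K') = 0 := by rw [heq, mul_zero]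
    rw [mul_add, ← mul_assoc, ← mul_assoc, Matrix.nonsing_inv_mul _ hu, one_mul] at h3
    linear_combination (norm := (rw [← sub_eq_zero]; noncomm_ring)) h3
  rw [← hsolve]; exact hK

/-! ### Euclidean-space derivative lemmas -/

lemma hasDerivAt_euclidean {n : ℕ} {f : ℝ → Evec n} {f' : Evec n} {t : ℝ} :
    HasDerivAt f f' t ↔ ∀ i, HasDerivAt (fun s => f s i) (f' i) t := by
  constructor
  · intro h i
    exact ((EuclideanSpace.proj i).hasFDerivAt.comp_hasDerivAt t h : _)
  · intro h
    have h2 : HasDerivAt (fun s => (EuclideanSpace.equiv (Fin n) ℝ) (f s))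
        (fun i => f' i) t := hasDerivAt_pi.2 h
    have h3 := (((EuclideanSpace.equiv (Fin n) ℝ).symm :
        (Fin n → ℝ) →L[ℝ] Evec n).hasFDerivAt.comp_hasDerivAt t h2)
    have h4 : (⇑((EuclideanSpace.equiv (Fin n) ℝ).symm : (Fin n → ℝ) →L[ℝ] Evec n) ∘
        fun s => (EuclideanSpace.equiv (Fin n) ℝ) (f s)) = f := by
      funext s; simp
    rw [h4] at h3; exact h3

lemma HD.mulVecE {a b : ℕ} {M : ℝ → Matrix (Fin a) (Fin b) ℝ} {M' : Matrix (Fin a) (Fin b) ℝ}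
    {u : ℝ → Evec b} {u' : Evec b} {t : ℝ}
    (hM : HD M M' t) (hu : HasDerivAt u u' t) :
    HasDerivAt (fun s => mvE (M s) (u s)) (mvE M' (u t) + mvE (M t) u') t := by
  rw [hasDerivAt_euclidean]
  intro i
  have hcoord : ∀ j, HasDerivAt (fun s => u s j) (u' j) t := hasDerivAt_euclidean.mp hu
  have h1 : HasDerivAt (fun s => ∑ j, M s i j * u s j)
      (∑ j, (M' i j * u t j + M t i j * u' j)) t :=
    HasDerivAt.fun_sum fun j _ => (hM i j).mul (hcoord j)
  have h2 : (fun s => mvE (M s) (u s) i) = fun s => ∑ j, M s i j * u s j := by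
    funext s; rw [mvE_apply]
  rw [h2]
  have h3 : (mvE M' (u t) + mvE (M t) u') i = ∑ j, (M' i j * u t j + M t i j * u' j) := by
    simp [mvE_apply, Finset.sum_add_distrib]
  rw [h3]
  exact h1

/-! ### Second derivative of f and the Jacobian path -/

lemma hm_sub {m n : ℕ} (f : Evec n → Evec m) (Hm : Evec n → Evec n → Matrix (Fin m) (Fin n) ℝ)
    (hHm : ∀ (x w z : Evec n), mvE (Hm x w) z = iteratedFDeriv ℝ 2 f x ![w, z])
    (x a b : Evec n) : Hm x (a - b) = Hm x a - Hm x b := by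
  ext i j
  have hup : ∀ (c z : Evec n), Function.update ![a - b, z] 0 c = ![c, z] := by
    intro c z; funext k; fin_cases k <;> simp
  have key : ∀ z : Evec n, iteratedFDeriv ℝ 2 f x ![a - b, z]
      = iteratedFDeriv ℝ 2 f x ![a, z] - iteratedFDeriv ℝ 2 f x ![b, z] := by
    intro z
    rw [← hup (a - b) z, (iteratedFDeriv ℝ 2 f x).map_update_sub, hup, hup]
  have h1 := hHm x (a - b) (EuclideanSpace.single j 1)
  rw [key, ← hHm x a, ← hHm x b] at h1
  have h2 : mvE (Hm x (a-b)) (EuclideanSpace.single j 1) i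
      = (mvE (Hm x a) (EuclideanSpace.single j 1)
          - mvE (Hm x b) (EuclideanSpace.single j 1)) i := by
    rw [h1]
  simpa [mvE_single, Matrix.sub_apply] using h2

lemma hd_J {m n : ℕ} (f : Evec n → Evec m) (hf : ContDiff ℝ (⊤ : ℕ∞) f)
    (J : Evec n → Matrix (Fin m) (Fin n) ℝ)
    (hJ : ∀ x, HasFDerivAt f
      (LinearMap.toContinuousLinearMap (Matrix.toEuclideanLin (J x))) x)
    (Hm : Evec n → Evec n → Matrix (Fin m) (Fin n) ℝ)
    (hHm : ∀ (x w z : Evec n), mvE (Hm x w) z = iteratedFDeriv ℝ 2 f x ![w, z])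
    {x : ℝ → Evec n} {xd : Evec n} {t : ℝ} (hx : HasDerivAt x xd t) :
    HD (fun s => J (x s)) (Hm (x t) xd) t := by
  intro i j
  have hg : ContDiff ℝ (⊤ : ℕ∞) (fderiv ℝ f) := hf.fderiv_right (by simp)
  have hgd : HasFDerivAt (fderiv ℝ f) (fderiv ℝ (fderiv ℝ f) (x t)) (x t) :=
    ((hg.differentiable (by simp)) (x t)).hasFDerivAt
  have h1 : HasDerivAt (fun s => fderiv ℝ f (x s)) (fderiv ℝ (fderiv ℝ f) (x t) xd) t :=
    hgd.comp_hasDerivAt t hx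
  let Φ : (Evec n →L[ℝ] Evec m) →L[ℝ] ℝ :=
    (EuclideanSpace.proj i).comp
      (ContinuousLinearMap.apply ℝ (Evec m) (EuclideanSpace.single j 1))
  have h2 := Φ.hasFDerivAt.comp_hasDerivAt t h1
  have hfd : ∀ y, fderiv ℝ f y = LinearMap.toContinuousLinearMap (Matrix.toEuclideanLin (J y)) :=
    fun y => (hJ y).fderiv
  have hl : (fun s => Φ (fderiv ℝ f (x s))) = fun s => J (x s) i j := by
    funext s
    rw [hfd]
    have : Φ (LinearMap.toContinuousLinearMap (Matrix.toEuclideanLin (J (x s))))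
        = mvE (J (x s)) (EuclideanSpace.single j 1) i := rfl
    rw [this, mvE_single]
  have hr : Φ (fderiv ℝ (fderiv ℝ f) (x t) xd) = Hm (x t) xd i j := by
    have h3 : Φ (fderiv ℝ (fderiv ℝ f) (x t) xd)
        = (fderiv ℝ (fderiv ℝ f) (x t) xd) (EuclideanSpace.single j 1) i := rfl
    have h4 : iteratedFDeriv ℝ 2 f (x t) ![xd, EuclideanSpace.single j 1]
        = fderiv ℝ (fderiv ℝ f) (x t) xd (EuclideanSpace.single j 1) := by
      rw [iteratedFDeriv_two_apply]
      simp
    have h5 := hHm (x t) xd (EuclideanSpace.single j 1)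
    rw [h4] at h5
    have h6 : mvE (Hm (x t) xd) (EuclideanSpace.single j 1) i
        = fderiv ℝ (fderiv ℝ f) (x t) xd (EuclideanSpace.single j 1) i := by rw [h5]
    rw [h3, ← h6, mvE_single]
  have h2' : HasDerivAt (fun s => Φ (fderiv ℝ f (x s)))
      (Φ ((fderiv ℝ (fderiv ℝ f) (x t)) xd)) t := h2
  rw [hl, hr] at h2'
  exact h2'

/-! ### Full-rank gives invertibility of `A Aᵀ` -/

lemma isUnit_AAT {m n : ℕ} (A : Matrix (Fin m) (Fin n) ℝ) (h : A.rank = m) :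
    IsUnit (A * Aᵀ).det := by
  rw [isUnit_iff_ne_zero]
  intro hdet
  obtain ⟨v, hvne, hv⟩ := (Matrix.exists_mulVec_eq_zero_iff).mpr hdet
  have h1 : Aᵀ.mulVec v = 0 := by
    have h2 : v ⬝ᵥ (A * Aᵀ).mulVec v = 0 := by rw [hv, dotProduct_zero]
    rw [← Matrix.mulVec_mulVec, Matrix.dotProduct_mulVec, ← Matrix.mulVec_transpose] at h2
    exact (dotProduct_self_eq_zero).mp h2
  have hker : v ∈ LinearMap.ker (Aᵀ.mulVecLin) := by
    simpa [Matrix.mulVecLin, Matrix.mulVec_transpose] using h1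
  have hrk : Aᵀ.rank = m := by rw [Matrix.rank_transpose]; exact h
  have hrn := LinearMap.finrank_range_add_finrank_ker (Aᵀ.mulVecLin)
  rw [show Module.finrank ℝ (Fin m → ℝ) = m by simp] at hrn
  have hker0 : Module.finrank ℝ (LinearMap.ker (Aᵀ.mulVecLin)) = 0 := by
    have := hrk
    rw [Matrix.rank] at this
    omega
  rw [Submodule.finrank_eq_zero] at hker0
  rw [hker0] at hker
  exact hvne (by simpa using hker)

/-! ### Matrix algebra -/

section Alg
variable {m n : ℕ} (A : Matrix (Fin m) (Fin n) ℝ) (hu : IsUnit (A * Aᵀ).det)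

lemma hBT : ((A * Aᵀ)⁻¹)ᵀ = (A * Aᵀ)⁻¹ := by
  rw [Matrix.transpose_nonsing_inv, Matrix.transpose_mul, Matrix.transpose_transpose]

include hu

lemma r2 {k : ℕ} (Y : Matrix (Fin m) (Fin k) ℝ) :
    (A * Aᵀ)⁻¹ * (A * (Aᵀ * Y)) = Y := by
  rw [← Matrix.mul_assoc A, ← Matrix.mul_assoc, Matrix.nonsing_inv_mul _ hu, Matrix.one_mul]

lemma r2' : (A * Aᵀ)⁻¹ * (A * Aᵀ) = 1 := Matrix.nonsing_inv_mul _ hu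

lemma r3 {k : ℕ} (Y : Matrix (Fin m) (Fin k) ℝ) :
    A * (Aᵀ * ((A * Aᵀ)⁻¹ * Y)) = Y := by
  rw [← Matrix.mul_assoc A, ← Matrix.mul_assoc, Matrix.mul_nonsing_inv _ hu, Matrix.one_mul]

lemma r3' : A * (Aᵀ * (A * Aᵀ)⁻¹) = 1 := by
  rw [← Matrix.mul_assoc A, Matrix.mul_nonsing_inv _ hu]

lemma grand (H1 H2 : Matrix (Fin m) (Fin n) ℝ) :
    ((H1ᵀ * (A * Aᵀ)⁻¹ + Aᵀ * (-((A * Aᵀ)⁻¹ * (H1 * Aᵀ + A * H1ᵀ) * (A * Aᵀ)⁻¹))) * A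
      + Aᵀ * (A * Aᵀ)⁻¹ * H1)
      + Nproj A * (Npar' A (H1 - H2) - Nperp' A (H1 - H2))
      = Npar' A H1 * Nproj A + Nperp' A H2 * Tproj A := by
  simp only [Nperp', Npar', Tproj, Nproj, pinv, Matrix.transpose_mul, Matrix.transpose_sub,
    Matrix.transpose_one, Matrix.transpose_transpose, hBT, Matrix.mul_sub, Matrix.sub_mul,
    Matrix.mul_add, Matrix.add_mul, Matrix.mul_one, Matrix.one_mul, Matrix.mul_neg,
    Matrix.neg_mul, Matrix.mul_assoc, r2 A hu, r3 A hu, r2' A hu, r3' A hu]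
  abel

end Alg

/-! ### Main theorem -/

theorem hug_ode_normal_velocity_derivative
    (m n : ℕ) (hm : 0 < m) (hmn : m < n)
    (f : Evec n → Evec m) (hf : ContDiff ℝ (⊤ : ℕ∞) f)
    (J : Evec n → Matrix (Fin m) (Fin n) ℝ)
    (hJ : ∀ x, HasFDerivAt f
      (LinearMap.toContinuousLinearMap (Matrix.toEuclideanLin (J x))) x)
    (hrank : ∀ x, (J x).rank = m)
    (Hm : Evec n → Evec n → Matrix (Fin m) (Fin n) ℝ)
    (hHm : ∀ (x w z : Evec n), mvE (Hm x w) z = iteratedFDeriv ℝ 2 f x ![w, z])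
    (I : Set ℝ) (x v : ℝ → Evec n)
    (hx : ∀ t ∈ I, HasDerivAt x (mvE (Tproj (J (x t))) (v t)) t)
    (hv : ∀ t ∈ I, HasDerivAt v (hugVField J Hm (x t) (v t)) t)
    :
    ∀ t ∈ I,
      HasDerivAt (fun s : ℝ => mvE (Nproj (J (x s))) (v s))
        (mvE (Npar' (J (x t)) (Hm (x t) (mvE (Tproj (J (x t))) (v t))))
            (mvE (Nproj (J (x t))) (v t))
          + mvE (Nperp' (J (x t)) (Hm (x t) (mvE (Nproj (J (x t))) (v t))))
            (mvE (Tproj (J (x t))) (v t))) t := by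
  intro t ht
  have hu : IsUnit ((J (x t)) * (J (x t))ᵀ).det := isUnit_AAT _ (hrank (x t))
  -- abbreviations
  set A : Matrix (Fin m) (Fin n) ℝ := J (x t) with hA
  set H1 : Matrix (Fin m) (Fin n) ℝ := Hm (x t) (mvE (Tproj A) (v t)) with hH1
  set H2 : Matrix (Fin m) (Fin n) ℝ := Hm (x t) (mvE (Nproj A) (v t)) with hH2
  -- derivative of the Jacobian path
  have hJd : HD (fun s => J (x s)) H1 t := hd_J f hf J hJ Hm hHm (hx t ht)
  have hJT : HD (fun s => (J (x s))ᵀ) H1ᵀ t := hJd.transpose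
  have hG : HD (fun s => J (x s) * (J (x s))ᵀ) (H1 * Aᵀ + A * H1ᵀ) t := hJd.mul hJT
  have hB : HD (fun s => (J (x s) * (J (x s))ᵀ)⁻¹)
      (-((A * Aᵀ)⁻¹ * (H1 * Aᵀ + A * H1ᵀ) * (A * Aᵀ)⁻¹)) t := hG.inv hu
  have hP : HD (fun s => (J (x s))ᵀ * (J (x s) * (J (x s))ᵀ)⁻¹)
      (H1ᵀ * (A * Aᵀ)⁻¹ + Aᵀ * (-((A * Aᵀ)⁻¹ * (H1 * Aᵀ + A * H1ᵀ) * (A * Aᵀ)⁻¹))) t :=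
    hJT.mul hB
  have hN : HD (fun s => Nproj (J (x s)))
      ((H1ᵀ * (A * Aᵀ)⁻¹ + Aᵀ * (-((A * Aᵀ)⁻¹ * (H1 * Aᵀ + A * H1ᵀ) * (A * Aᵀ)⁻¹))) * A
        + Aᵀ * (A * Aᵀ)⁻¹ * H1) t := by
    have h := hP.mul hJd
    exact h
  have hMain := hN.mulVecE (hv t ht)
  -- rewrite the derivative value
  have hw : mvE (Tproj A - Nproj A) (v t) = mvE (Tproj A) (v t) - mvE (Nproj A) (v t) :=
    mvE_sub_mat _ _ _
  have hHd : Hm (x t) (mvE (Tproj A - Nproj A) (v t)) = H1 - H2 := by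
    rw [hw, hm_sub f Hm hHm]
  have hval :
      mvE ((H1ᵀ * (A * Aᵀ)⁻¹ + Aᵀ * (-((A * Aᵀ)⁻¹ * (H1 * Aᵀ + A * H1ᵀ) * (A * Aᵀ)⁻¹))) * A
        + Aᵀ * (A * Aᵀ)⁻¹ * H1) (v t)
      + mvE (Nproj A) (hugVField J Hm (x t) (v t))
      = mvE (Npar' A H1) (mvE (Nproj A) (v t)) + mvE (Nperp' A H2) (mvE (Tproj A) (v t)) := by
    rw [hugVField, ← hA, hHd, ← mvE_mul, ← mvE_add_mat, ← mvE_mul, ← mvE_mul, ← mvE_add_mat,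
      grand A hu H1 H2]
  rw [hval] at hMain
  exact hMain
end
end
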